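/- The max-plus equation A ⊞ x = b has a solution x ∈ ℝ_max^n if and only if the principal solution x̂ = (-A)ᵀ ⊞' b satisfies A ⊞ x̂ = b. -/

import Mathlib

/-- Max-plus matrix-vector product over ℝ_max = WithBot ℝ. -/
noncomputable def maxPlus {m n : ℕ} (A : Fin m → Fin n → ℝ) (x : Fin n → WithBot ℝ)
    (i : Fin m) : WithBot ℝ :=
  Finset.univ.sup fun k => (A i k : WithBot ℝ) + x k

/-- The principal solution `x̂_j = min_i (b_i - a_{ij})`. -/
noncomputable def principalSol {m n : ℕ} (A : Fin (m + 1) → Fin n → ℝ)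
    (b : Fin (m + 1) → ℝ) (j : Fin n) : ℝ :=
  Finset.univ.inf' Finset.univ_nonempty fun i => b i - A i j

/--  has a solution iff the principal solution satisfies it. -/
theorem exists_solution_iff_principal (m n : ℕ) (A : Fin (m + 1) → Fin (n + 1) → ℝ)
    (b : Fin (m + 1) → ℝ) :
    (∃ x : Fin (n + 1) → WithBot ℝ, ∀ i, maxPlus A x i = (b i : WithBot ℝ)) ↔
      (∀ i, maxPlus A (fun j => ((principalSol A b j : ℝ) : WithBot ℝ)) i = (b i : WithBot ℝ)) := by
  constructor
  · rintro ⟨x, hx⟩ i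
    have hxle : ∀ k : Fin (n + 1), x k ≤ ((principalSol A b k : ℝ) : WithBot ℝ) := by
      intro k
      have h1 : ∀ i, x k ≤ ((b i - A i k : ℝ) : WithBot ℝ) := by
        intro i
        have hs : (A i k : WithBot ℝ) + x k ≤ (b i : WithBot ℝ) := by
          rw [← hx i]
          exact Finset.le_sup (f := fun k => (A i k : WithBot ℝ) + x k) (Finset.mem_univ k)
        cases hxk : x k with
        | bot => exact bot_le
        | coe r =>
          rw [hxk, ← WithBot.coe_add] at hs
          have := WithBot.coe_le_coe.mp hs
          exact WithBot.coe_le_coe.mpr (by linarith)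
      cases hxk : x k with
      | bot => exact bot_le
      | coe r =>
        refine WithBot.coe_le_coe.mpr (Finset.le_inf' _ _ fun i _ => ?_)
        have := h1 i; rw [hxk] at this
        exact WithBot.coe_le_coe.mp this
    apply le_antisymm
    · refine Finset.sup_le fun k _ => ?_
      rw [← WithBot.coe_add]
      refine WithBot.coe_le_coe.mpr ?_
      have := Finset.inf'_le (fun i => b i - A i k) (Finset.mem_univ i)
      have h2 : principalSol A b k ≤ b i - A i k := this
      linarith
    · rw [← hx i]
      exact Finset.sup_mono_fun fun k _ => add_le_add (le_refl _) (hxle k)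
  · intro h; exact ⟨_, h⟩
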